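/- Let n be an odd positive integer, N a positive integer, A ∈ M_N(ℂ), and B₀, B₁, …, Bₙ ∈ M_N(ℂ). Then ∑_{σ ∈ S_{n+1}} sgn(σ) · Tr( B_{σ(0)} A B_{σ(1)} A ⋯ B_{σ(n)} A ) = 0. -/

import Mathlib

lemma trace_rotate_one {N : ℕ} (l : List (Matrix (Fin N) (Fin N) ℂ)) :
    Matrix.trace (l.rotate 1).prod = Matrix.trace l.prod := by
  cases l with
  | nil => simp
  | cons a t =>
      simp only [List.rotate_cons_succ, List.rotate_zero, List.prod_append,
        List.prod_cons, List.prod_nil, mul_one]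
      rw [Matrix.trace_mul_comm]

lemma ofFn_comp_finRotate {α : Type*} {n : ℕ} (f : Fin (n + 1) → α) :
    List.ofFn (fun i => f (finRotate (n + 1) i)) = (List.ofFn f).rotate 1 := by
  apply List.ext_getElem
  · simp
  · intro i h1 h2
    simp only [List.getElem_ofFn, List.getElem_rotate, List.length_ofFn] at *
    congr 1
    rw [finRotate_succ_apply]
    ext
    simp [Fin.add_def, Nat.add_comm]

theorem stmt_6 (n N : ℕ) (hn : Odd n) (hn' : 0 < n) (hN : 0 < N)
    (A : Matrix (Fin N) (Fin N) ℂ) (B : Fin (n + 1) → Matrix (Fin N) (Fin N) ℂ) :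
    ∑ σ : Equiv.Perm (Fin (n + 1)),
      (Equiv.Perm.sign σ : ℤ) •
        Matrix.trace ((List.ofFn (fun i : Fin (n + 1) => B (σ i) * A)).prod) = 0 := by
  set F : Equiv.Perm (Fin (n + 1)) → ℂ := fun σ =>
    (Equiv.Perm.sign σ : ℤ) •
      Matrix.trace ((List.ofFn (fun i : Fin (n + 1) => B (σ i) * A)).prod) with hF
  have key : ∑ σ, F σ = -∑ σ, F σ := by
    have h1 : ∑ σ, F σ = ∑ σ, F (σ * finRotate (n + 1)) :=
      (Fintype.sum_equiv (Equiv.mulRight (finRotate (n + 1))) _ _ (fun σ => rfl)).symm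
    conv_lhs => rw [h1]
    rw [← Finset.sum_neg_distrib]
    apply Finset.sum_congr rfl
    intro σ _
    have hsign : (Equiv.Perm.sign (σ * finRotate (n + 1)) : ℤ) = -(Equiv.Perm.sign σ : ℤ) := by
      rw [map_mul, sign_finRotate, Nat.add_sub_cancel, hn.neg_one_pow]
      push_cast
      ring
    have htr : Matrix.trace ((List.ofFn (fun i : Fin (n + 1) =>
        B ((σ * finRotate (n + 1)) i) * A)).prod) =
        Matrix.trace ((List.ofFn (fun i : Fin (n + 1) => B (σ i) * A)).prod) := by
      have := ofFn_comp_finRotate (fun i => B (σ i) * A)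
      simp only [Equiv.Perm.coe_mul, Function.comp_apply]
      rw [show (fun i : Fin (n+1) => B (σ (finRotate (n+1) i)) * A) =
        (fun i => (fun j => B (σ j) * A) (finRotate (n+1) i)) from rfl, this,
        trace_rotate_one]
    simp only [hF]
    rw [hsign, htr, neg_smul]
  have h2 : (2 : ℂ) * ∑ σ, F σ = 0 := by
    rw [two_mul]
    nth_rewrite 1 [key]
    ring
  have := mul_eq_zero.mp h2
  simpa using this
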